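/- For every t ∈ [0,1), the 2×2 operator matrix U_t := [[α_t, −t γ_t*], [γ_t, α_t*]] is a unitary operator on ℓ²(ℕ×ℤ) ⊕ ℓ²(ℕ×ℤ). -/

import Mathlib

/-- `ℓ²(ℕ×ℤ)`: the Hilbert space of square-summable complex families indexed by `ℕ × ℤ`. -/
noncomputable abbrev l2NZ : Type := lp (fun _ : ℕ × ℤ => ℂ) 2

/-- The standard orthonormal basis vectors `e_{n,k}` of `ℓ²(ℕ×ℤ)`. -/
noncomputable def eNZ (n : ℕ) (k : ℤ) : l2NZ := lp.single 2 (n, k) (1 : ℂ)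

/-- The Hilbert space direct sum `ℓ²(ℕ×ℤ) ⊕ ℓ²(ℕ×ℤ)`. -/
noncomputable abbrev H2 : Type := WithLp 2 (l2NZ × l2NZ)

/-- The element of `ℓ²(ℕ×ℤ) ⊕ ℓ²(ℕ×ℤ)` with components `x` and `y`. -/
noncomputable def pairH2 (x y : l2NZ) : H2 := (WithLp.equiv 2 (l2NZ × l2NZ)).symm (x, y)

/-- The defining property of the operators `α_t, γ_t` on `ℓ²(ℕ×ℤ)`:
`α_t e_{n,k} = √(1−t^{2n}) e_{n−1,k−1}` for `n ≥ 1`, `α_t e_{0,k} = 0`, and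
`γ_t e_{n,k} = tⁿ e_{n,k−1}` (with the convention `0⁰ = 1`, so at `t = 0` this reads
`α₀ e_{n,k} = e_{n−1,k−1}` for `n ≥ 1`, `α₀ e_{0,k} = 0`, `γ₀ e_{0,k} = e_{0,k−1}`,
`γ₀ e_{n,k} = 0` for `n ≥ 1`). -/
def IsAlphaGamma (t : ℝ) (α γ : l2NZ →L[ℂ] l2NZ) : Prop :=
  (∀ (n : ℕ) (k : ℤ),
    α (eNZ (n + 1) k) = (Real.sqrt (1 - t ^ (2 * (n + 1))) : ℂ) • eNZ n (k - 1)) ∧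
  (∀ k : ℤ, α (eNZ 0 k) = 0) ∧
  (∀ (n : ℕ) (k : ℤ), γ (eNZ n k) = ((t ^ n : ℝ) : ℂ) • eNZ n (k - 1))

open scoped InnerProductSpace in
lemma inner_ee (m n : ℕ) (j k : ℤ) :
    ⟪eNZ m j, eNZ n k⟫_ℂ = if m = n ∧ j = k then 1 else 0 := by
  classical
  rw [eNZ, eNZ, lp.inner_single_left]
  simp [lp.single_apply, Pi.single_apply, Prod.ext_iff, eq_comm, and_comm]

open scoped InnerProductSpace in
lemma vecext {x y : l2NZ} (hxy : ∀ (n : ℕ) (k : ℤ), ⟪eNZ n k, x⟫_ℂ = ⟪eNZ n k, y⟫_ℂ) :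
    x = y := by
  apply lp.ext
  funext p
  obtain ⟨n, k⟩ := p
  have := hxy n k
  rwa [eNZ, lp.inner_single_left, lp.inner_single_left, RCLike.inner_apply, RCLike.inner_apply,
    map_one, mul_one, mul_one] at this



lemma dense_span_eNZ :
    Dense (Submodule.span ℂ (Set.range fun p : ℕ × ℤ => eNZ p.1 p.2) : Set l2NZ) := by
  intro x
  refine mem_closure_of_tendsto (lp.hasSum_single ENNReal.ofNat_ne_top x)
    (Filter.Eventually.of_forall fun s => ?_)
  refine Submodule.sum_mem _ fun p _ => ?_
  have h1 : lp.single 2 p (x p) = x p • eNZ p.1 p.2 := by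
    have := lp.single_smul (E := fun _ : ℕ × ℤ => ℂ) 2 p (x p) (1 : ℂ)
    rw [smul_eq_mul, mul_one] at this
    rw [eNZ, this]
  rw [h1]
  exact Submodule.smul_mem _ _ (Submodule.subset_span ⟨p, rfl⟩)


open ContinuousLinearMap InnerProductSpace in
open scoped InnerProductSpace in
section
variable (t : ℝ) (α γ : l2NZ →L[ℂ] l2NZ)

lemma adjoint_gamma_apply (h : IsAlphaGamma t α γ) (n : ℕ) (k : ℤ) :
    ContinuousLinearMap.adjoint γ (eNZ n k) = ((t ^ n : ℝ) : ℂ) • eNZ n (k + 1) := by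
  apply vecext
  intro m j
  rw [ContinuousLinearMap.adjoint_inner_right, h.2.2, inner_smul_left, inner_smul_right,
    inner_ee, inner_ee, Complex.conj_ofReal]
  by_cases hmn : m = n
  · subst hmn
    by_cases hjk : j = k + 1
    · subst hjk; simp
    · have : ¬(j - 1 = k) := by omega
      simp [hjk, this]
  · simp [hmn]

lemma adjoint_alpha_apply (h : IsAlphaGamma t α γ) (n : ℕ) (k : ℤ) :
    ContinuousLinearMap.adjoint α (eNZ n k) =
      ((Real.sqrt (1 - t ^ (2 * (n + 1))) : ℝ) : ℂ) • eNZ (n + 1) (k + 1) := by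
  apply vecext
  intro m j
  rw [ContinuousLinearMap.adjoint_inner_right, inner_smul_right, inner_ee]
  match m with
  | 0 =>
    rw [h.2.1]
    simp
  | m + 1 =>
    rw [h.1, inner_smul_left, inner_ee, Complex.conj_ofReal]
    by_cases hmn : m = n
    · subst hmn
      by_cases hjk : j = k + 1
      · subst hjk; simp
      · have : ¬(j - 1 = k) := by omega
        simp [hjk, this]
    · have : ¬(m + 1 = n + 1) := by omega
      simp [hmn, this]
end

section
variable {t : ℝ} {α γ : l2NZ →L[ℂ] l2NZ}
open ContinuousLinearMap

lemma sqc (ht0 : 0 ≤ t) (ht1 : t < 1) (n : ℕ) :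
    (Real.sqrt (1 - t ^ (2 * (n + 1))) : ℂ) * (Real.sqrt (1 - t ^ (2 * (n + 1))) : ℂ)
      = 1 - (t : ℂ) ^ (2 * (n + 1)) := by
  rw [← Complex.ofReal_mul, Real.mul_self_sqrt (sub_nonneg.mpr (pow_le_one₀ ht0 ht1.le))]
  push_cast
  ring

lemma idA (ht0 : 0 ≤ t) (ht1 : t < 1) (h : IsAlphaGamma t α γ) (x : l2NZ) :
    adjoint α (α x) + adjoint γ (γ x) = x := by
  have key : (adjoint α).comp α + (adjoint γ).comp γ = ContinuousLinearMap.id ℂ l2NZ := by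
    apply ContinuousLinearMap.ext_on dense_span_eNZ
    rintro _ ⟨⟨n, k⟩, rfl⟩
    simp only [ContinuousLinearMap.add_apply, ContinuousLinearMap.comp_apply,
      ContinuousLinearMap.id_apply]
    match n with
    | 0 =>
      rw [h.2.1, map_zero, h.2.2, map_smul, adjoint_gamma_apply t α γ h, smul_smul]
      simp
    | n + 1 =>
      rw [h.1, map_smul, adjoint_alpha_apply t α γ h, smul_smul, h.2.2, map_smul,
        adjoint_gamma_apply t α γ h, smul_smul, sub_add_cancel, ← add_smul, sqc ht0 ht1,
        ← Complex.ofReal_mul, ← pow_add]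
      rw [show n + 1 + (n + 1) = 2 * (n + 1) from by ring]
      push_cast
      rw [sub_add_cancel, one_smul]
  simpa using DFunLike.congr_fun key x

lemma idA' (ht0 : 0 ≤ t) (ht1 : t < 1) (h : IsAlphaGamma t α γ) (x : l2NZ) :
    γ (adjoint γ x) + adjoint α (α x) = x := by
  have key : γ.comp (adjoint γ) + (adjoint α).comp α = ContinuousLinearMap.id ℂ l2NZ := by
    apply ContinuousLinearMap.ext_on dense_span_eNZ
    rintro _ ⟨⟨n, k⟩, rfl⟩
    simp only [ContinuousLinearMap.add_apply, ContinuousLinearMap.comp_apply,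
      ContinuousLinearMap.id_apply]
    rw [adjoint_gamma_apply t α γ h, map_smul, h.2.2, smul_smul, add_sub_cancel_right]
    match n with
    | 0 =>
      rw [h.2.1, map_zero]
      simp
    | n + 1 =>
      rw [h.1, map_smul, adjoint_alpha_apply t α γ h, smul_smul, sub_add_cancel, ← add_smul,
        sqc ht0 ht1, ← Complex.ofReal_mul, ← pow_add,
        show n + 1 + (n + 1) = 2 * (n + 1) from by ring]
      push_cast
      rw [add_sub_cancel, one_smul]
  simpa using DFunLike.congr_fun key x

lemma idB (ht0 : 0 ≤ t) (ht1 : t < 1) (h : IsAlphaGamma t α γ) (x : l2NZ) :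
    α (adjoint α x) + ((t : ℂ) ^ 2) • adjoint γ (γ x) = x := by
  have key : α.comp (adjoint α) + ((t : ℂ) ^ 2) • (adjoint γ).comp γ
      = ContinuousLinearMap.id ℂ l2NZ := by
    apply ContinuousLinearMap.ext_on dense_span_eNZ
    rintro _ ⟨⟨n, k⟩, rfl⟩
    simp only [ContinuousLinearMap.add_apply, ContinuousLinearMap.comp_apply,
      ContinuousLinearMap.id_apply, ContinuousLinearMap.smul_apply]
    rw [adjoint_alpha_apply t α γ h, map_smul, h.1, smul_smul, add_sub_cancel_right,
      h.2.2, map_smul, adjoint_gamma_apply t α γ h, smul_smul, sub_add_cancel, smul_smul,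
      ← add_smul, sqc ht0 ht1]
    push_cast
    rw [show (1:ℂ) - (t:ℂ)^(2*(n+1)) + (t:ℂ)^2 * (t:ℂ)^n * (t:ℂ)^n = 1 from by ring, one_smul]
  simpa using DFunLike.congr_fun key x

lemma idB' (ht0 : 0 ≤ t) (ht1 : t < 1) (h : IsAlphaGamma t α γ) (x : l2NZ) :
    α (adjoint α x) + ((t : ℂ) ^ 2) • γ (adjoint γ x) = x := by
  have key : α.comp (adjoint α) + ((t : ℂ) ^ 2) • γ.comp (adjoint γ)
      = ContinuousLinearMap.id ℂ l2NZ := by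
    apply ContinuousLinearMap.ext_on dense_span_eNZ
    rintro _ ⟨⟨n, k⟩, rfl⟩
    simp only [ContinuousLinearMap.add_apply, ContinuousLinearMap.comp_apply,
      ContinuousLinearMap.id_apply, ContinuousLinearMap.smul_apply]
    rw [adjoint_alpha_apply t α γ h, map_smul, h.1, smul_smul, add_sub_cancel_right,
      adjoint_gamma_apply t α γ h, map_smul, h.2.2, smul_smul, add_sub_cancel_right, smul_smul,
      ← add_smul, sqc ht0 ht1]
    push_cast
    rw [show (1:ℂ) - (t:ℂ)^(2*(n+1)) + (t:ℂ)^2 * (t:ℂ)^n * (t:ℂ)^n = 1 from by ring, one_smul]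
  simpa using DFunLike.congr_fun key x

lemma idC (h : IsAlphaGamma t α γ) (x : l2NZ) :
    α (γ x) = (t : ℂ) • γ (α x) := by
  have key : α.comp γ = (t : ℂ) • γ.comp α := by
    apply ContinuousLinearMap.ext_on dense_span_eNZ
    rintro _ ⟨⟨n, k⟩, rfl⟩
    simp only [ContinuousLinearMap.comp_apply, ContinuousLinearMap.smul_apply]
    match n with
    | 0 =>
      rw [h.2.2, map_smul, h.2.1, h.2.1]
      simp
    | n + 1 =>
      rw [h.2.2, map_smul, h.1, smul_smul, h.1, map_smul, h.2.2, smul_smul, smul_smul]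
      congr 1
      push_cast
      ring
  exact DFunLike.congr_fun key x

lemma idD (h : IsAlphaGamma t α γ) (x : l2NZ) :
    γ (adjoint α x) = (t : ℂ) • adjoint α (γ x) := by
  have key : γ.comp (adjoint α) = (t : ℂ) • (adjoint α).comp γ := by
    apply ContinuousLinearMap.ext_on dense_span_eNZ
    rintro _ ⟨⟨n, k⟩, rfl⟩
    simp only [ContinuousLinearMap.comp_apply, ContinuousLinearMap.smul_apply]
    rw [adjoint_alpha_apply t α γ h, map_smul, h.2.2, smul_smul, add_sub_cancel_right,
      h.2.2, map_smul, adjoint_alpha_apply t α γ h, smul_smul, sub_add_cancel, smul_smul]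
    congr 1
    push_cast
    ring
  exact DFunLike.congr_fun key x

lemma idE (h : IsAlphaGamma t α γ) (x : l2NZ) :
    α (adjoint γ x) = (t : ℂ) • adjoint γ (α x) := by
  have key : α.comp (adjoint γ) = (t : ℂ) • (adjoint γ).comp α := by
    apply ContinuousLinearMap.ext_on dense_span_eNZ
    rintro _ ⟨⟨n, k⟩, rfl⟩
    simp only [ContinuousLinearMap.comp_apply, ContinuousLinearMap.smul_apply]
    match n with
    | 0 =>
      rw [adjoint_gamma_apply t α γ h, map_smul, h.2.1, h.2.1]
      simp
    | n + 1 =>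
      rw [adjoint_gamma_apply t α γ h, map_smul, h.1, smul_smul, add_sub_cancel_right,
        h.1, map_smul, adjoint_gamma_apply t α γ h, smul_smul, smul_smul, sub_add_cancel]
      congr 1
      push_cast
      ring
  exact DFunLike.congr_fun key x

lemma idF (h : IsAlphaGamma t α γ) (x : l2NZ) :
    adjoint γ (adjoint α x) = (t : ℂ) • adjoint α (adjoint γ x) := by
  have key : (adjoint γ).comp (adjoint α) = (t : ℂ) • (adjoint α).comp (adjoint γ) := by
    apply ContinuousLinearMap.ext_on dense_span_eNZ
    rintro _ ⟨⟨n, k⟩, rfl⟩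
    simp only [ContinuousLinearMap.comp_apply, ContinuousLinearMap.smul_apply]
    rw [adjoint_alpha_apply t α γ h, map_smul, adjoint_gamma_apply t α γ h, smul_smul,
      adjoint_gamma_apply t α γ h, map_smul, adjoint_alpha_apply t α γ h, smul_smul, smul_smul]
    congr 1
    push_cast
    ring
  exact DFunLike.congr_fun key x
end


open ContinuousLinearMap in
/-- **Statement 9.** For every `t ∈ [0,1)`, the 2×2 operator matrix
`U_t = [[α_t, −t γ_t*], [γ_t, α_t*]]` is a unitary operator on `ℓ²(ℕ×ℤ) ⊕ ℓ²(ℕ×ℤ)`. -/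
theorem Ut_unitary (t : ℝ) (ht0 : 0 ≤ t) (ht1 : t < 1)
    (α γ : l2NZ →L[ℂ] l2NZ) (h : IsAlphaGamma t α γ)
    (U : H2 →L[ℂ] H2)
    (hU : ∀ x y : l2NZ, U (pairH2 x y) =
      pairH2 (α x - (t : ℂ) • adjoint γ y) (γ x + adjoint α y)) :
    adjoint U * U = 1 ∧ U * adjoint U = 1 := by
  classical
  let E := WithLp.prodContinuousLinearEquiv 2 ℂ l2NZ l2NZ
  let M : (l2NZ × l2NZ) →L[ℂ] (l2NZ × l2NZ) :=
    ((adjoint α).coprod (adjoint γ)).prod (((-(t : ℂ)) • γ).coprod α)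
  let W : H2 →L[ℂ] H2 := (E.symm.toContinuousLinearMap.comp M).comp E.toContinuousLinearMap
  have hW : ∀ x y : l2NZ, W (pairH2 x y) =
      pairH2 (adjoint α x + adjoint γ y) ((-(t : ℂ)) • γ x + α y) := fun x y => rfl
  have hzdec : ∀ z : H2, z = pairH2 (E z).1 (E z).2 := fun z => rfl
  have hpair : ∀ a b c d : l2NZ, a = c → b = d → pairH2 a b = pairH2 c d := by
    rintro a b c d rfl rfl; rfl
  have hUWp : ∀ x y : l2NZ, U (W (pairH2 x y)) = pairH2 x y := by
    intro x y
    rw [hW, hU]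
    apply hpair
    · rw [map_add, map_add, map_smul, idE h y]
      conv_rhs => rw [← idB ht0 ht1 h x]
      module
    · rw [map_add, map_add, map_smul, idD h x]
      conv_rhs => rw [← idA' ht0 ht1 h y]
      module
  have hWUp : ∀ x y : l2NZ, W (U (pairH2 x y)) = pairH2 x y := by
    intro x y
    rw [hU, hW]
    apply hpair
    · rw [map_sub, map_add, map_smul, idF h y]
      conv_rhs => rw [← idA ht0 ht1 h x]
      module
    · rw [map_sub, map_add, map_smul, idC h x]
      conv_rhs => rw [← idB' ht0 ht1 h y]
      module
  have hinner : ∀ a b c d : l2NZ,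
      (inner ℂ (pairH2 a b) (pairH2 c d) : ℂ) = inner ℂ a c + inner ℂ b d := fun _ _ _ _ => rfl
  have hadj : W = adjoint U := by
    rw [ContinuousLinearMap.eq_adjoint_iff]
    intro z w
    rw [hzdec z, hzdec w, hW, hU, hinner, hinner]
    simp only [inner_add_left, inner_add_right, inner_sub_right, inner_smul_left,
      inner_smul_right, adjoint_inner_left, adjoint_inner_right, map_neg,
      Complex.conj_ofReal]
    ring
  constructor
  · exact ContinuousLinearMap.ext fun z => by
      rw [ContinuousLinearMap.mul_apply, ← hadj, ContinuousLinearMap.one_apply,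
        hzdec z, hWUp]
  · exact ContinuousLinearMap.ext fun z => by
      rw [ContinuousLinearMap.mul_apply, ← hadj, ContinuousLinearMap.one_apply,
        hzdec z, hUWp]
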